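/- For all integers p ≥ 0 and q ≥ 1, the improper integral ∫_0^∞ u^p (log(1+e^{-u}))^q du converges and equals p!·q!·(-1)^q·ζ(\overline{p+2},{1}_{q-1}), i.e. ∫_0^∞ u^p (log(1+e^{-u}))^q du = p!·q!·(-1)^q · Σ_{n_1 > n_2 > ⋯ > n_q ≥ 1} (-1)^{n_1} / (n_1^{p+2} · n_2 · n_3 ⋯ n_q). -/

import Mathlib

/-- The alternating multiple zeta value `zeta(a-bar, {1}_r)`, i.e. the sum over
strictly decreasing tuples `n_0 > n_1 > ... > n_r >= 1` of
`(-1)^(n_0) / (n_0^a * n_1 * ... * n_r)`. -/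
noncomputable def altMZV (a r : ℕ) : ℝ :=
  ∑' f : {f : Fin (r + 1) → ℕ // (∀ i, 1 ≤ f i) ∧ StrictAnti f},
    (-1 : ℝ) ^ (f.1 0) / ((f.1 0 : ℝ) ^ a * ∏ i : Fin r, (f.1 i.succ : ℝ))

/-- The alternating zeta value `zeta(a-bar) = sum_{k>=1} (-1)^k / k^a`. -/
noncomputable def altZeta (a : ℕ) : ℝ := ∑' k : ℕ+, (-1 : ℝ) ^ (k : ℕ) / (k : ℝ) ^ a

/-- The Riemann zeta value `zeta(m) = sum_{n>=1} 1 / n^m`. -/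
noncomputable def zetaVal (m : ℕ) : ℝ := ∑' n : ℕ+, 1 / (n : ℝ) ^ m

set_option maxHeartbeats 1000000
open Finset


noncomputable def Eseq : ℕ → ℕ → ℝ
  | 0, _ => 1
  | (k+1), N => ∑ m ∈ Finset.Ico 1 N, Eseq k m / (m : ℝ)

noncomputable def Cseq : ℕ → ℕ → ℝ
  | 0, N => if N = 0 then 1 else 0
  | (q+1), N => ∑ n ∈ Finset.Icc 1 N, ((n : ℝ))⁻¹ * Cseq q (N - n)

lemma Eseq_nonneg : ∀ k N, 0 ≤ Eseq k N := by
  intro k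
  induction k with
  | zero => intro N; simp [Eseq]
  | succ k ih =>
    intro N
    rw [Eseq]
    apply Finset.sum_nonneg
    intro m hm
    have := ih m
    positivity

lemma Cseq_nonneg : ∀ q N, 0 ≤ Cseq q N := by
  intro q
  induction q with
  | zero => intro N; rw [Cseq]; split <;> norm_num
  | succ q ih =>
    intro N
    rw [Cseq]
    apply Finset.sum_nonneg
    intro m hm
    have := ih (N - m)
    positivity

lemma Cseq_succ_zero (q : ℕ) : Cseq (q+1) 0 = 0 := by
  rw [Cseq]; simp

lemma Cseq_one (N : ℕ) : Cseq 1 N = if 1 ≤ N then ((N : ℝ))⁻¹ else 0 := by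
  rw [Cseq]
  have h : ∀ n ∈ Finset.Icc 1 N, ((n:ℝ))⁻¹ * Cseq 0 (N - n)
      = if n = N then ((N:ℝ))⁻¹ else 0 := by
    intro n hn
    rw [Finset.mem_Icc] at hn
    rw [Cseq]
    rcases eq_or_ne n N with rfl | hne
    · simp [Nat.sub_self]
    · have : N - n ≠ 0 := by omega
      simp [this, hne]
  rw [Finset.sum_congr rfl h, Finset.sum_ite_eq' (Finset.Icc 1 N) N]
  simp [Finset.mem_Icc]

lemma sum_Icc_sub_eq_sum_range (f : ℕ → ℝ) (N : ℕ) :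
    ∑ n ∈ Finset.Icc 1 N, f (N - n) = ∑ M ∈ Finset.range N, f M := by
  rw [← Finset.Ico_add_one_right_eq_Icc, Finset.sum_Ico_eq_sum_range]
  have h1 : N + 1 - 1 = N := by omega
  rw [h1]
  rw [← Finset.sum_range_reflect (fun j => f j) N]
  apply Finset.sum_congr rfl
  intro i hi
  congr 1
  omega

lemma sum_swap_triangle (f : ℕ → ℕ → ℝ) (N : ℕ) :
    ∑ M ∈ Finset.range N, ∑ n ∈ Finset.Icc 1 M, f n (M - n)
      = ∑ n ∈ Finset.Icc 1 N, ∑ j ∈ Finset.range (N - n), f n j := by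
  have step1 : ∀ M ∈ Finset.range N,
      ∑ n ∈ Finset.Icc 1 M, f n (M - n)
        = ∑ n ∈ Finset.Icc 1 N, (if n ≤ M then f n (M - n) else 0) := by
    intro M hM
    rw [Finset.mem_range] at hM
    rw [Finset.sum_congr rfl (g := fun n => if n ≤ M then f n (M - n) else 0)
      (fun n hn => by rw [Finset.mem_Icc] at hn; simp [hn.2])]
    apply Finset.sum_subset
    · exact Finset.Icc_subset_Icc_right (le_of_lt hM)
    · intro n hn hn'
      rw [Finset.mem_Icc] at hn hn'
      rw [if_neg]; omega
  rw [Finset.sum_congr rfl step1, Finset.sum_comm]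
  apply Finset.sum_congr rfl
  intro n hn
  have hfil : (Finset.range N).filter (fun M => n ≤ M) = Finset.Ico n N := by
    ext M; simp [Finset.mem_filter, Finset.mem_range, Finset.mem_Ico, and_comm]
  rw [← Finset.sum_filter, hfil, Finset.sum_Ico_eq_sum_range]
  apply Finset.sum_congr rfl
  intro i hi
  congr 1
  omega

lemma L1 : ∀ (q N : ℕ), (N : ℝ) * Cseq (q+1) N = ((q : ℝ)+1) * ∑ M ∈ Finset.range N, Cseq q M := by
  intro q
  induction q with
  | zero =>
    intro N
    rcases Nat.eq_zero_or_pos N with rfl | hN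
    · simp [Cseq_succ_zero]
    · rw [Cseq_one, if_pos (show 1 ≤ N from hN)]
      have hN' : (N:ℝ) ≠ 0 := by positivity
      rw [mul_inv_cancel₀ hN']
      have : ∀ M ∈ Finset.range N, Cseq 0 M = if M = 0 then 1 else 0 := by
        intro M hM; rw [Cseq]
      rw [Finset.sum_congr rfl this, Finset.sum_ite_eq' (Finset.range N) 0]
      simp [Finset.mem_range, hN]
  | succ q ih =>
    intro N
    have key : ∀ n ∈ Finset.Icc 1 N,
        (N:ℝ) * (((n:ℝ))⁻¹ * Cseq (q+1) (N - n))
          = Cseq (q+1) (N - n) + ((n:ℝ))⁻¹ * (((q:ℝ)+1) * ∑ j ∈ Finset.range (N - n), Cseq q j) := by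
      intro n hn
      rw [Finset.mem_Icc] at hn
      rw [← ih (N - n)]
      have hcast : (N:ℝ) = (n:ℝ) + ((N - n : ℕ) : ℝ) := by
        rw [Nat.cast_sub hn.2]
        ring
      have hn0 : ((n:ℝ)) ≠ 0 := by
        have : 0 < n := hn.1
        positivity
      have hmc : (n:ℝ) * (((n:ℝ))⁻¹ * Cseq (q+1) (N - n)) = Cseq (q+1) (N - n) := by
        rw [← mul_assoc, mul_inv_cancel₀ hn0, one_mul]
      rw [hcast, add_mul, hmc]
      ring
    rw [Cseq, Finset.mul_sum, Finset.sum_congr rfl key, Finset.sum_add_distrib]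
    have e1 : ∑ n ∈ Finset.Icc 1 N, Cseq (q+1) (N - n) = ∑ M ∈ Finset.range N, Cseq (q+1) M :=
      sum_Icc_sub_eq_sum_range _ N
    have e2 : ∑ M ∈ Finset.range N, Cseq (q+1) M
        = ∑ n ∈ Finset.Icc 1 N, ((n:ℝ))⁻¹ * ∑ j ∈ Finset.range (N - n), Cseq q j := by
      have : ∀ M ∈ Finset.range N, Cseq (q+1) M = ∑ n ∈ Finset.Icc 1 M, ((n:ℝ))⁻¹ * Cseq q (M - n) := by
        intro M hM; rw [Cseq]
      rw [Finset.sum_congr rfl this, sum_swap_triangle (fun n j => ((n:ℝ))⁻¹ * Cseq q j) N]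
      apply Finset.sum_congr rfl
      intro n hn
      rw [Finset.mul_sum]
    have e3 : ∑ x ∈ Finset.Icc 1 N, ((x:ℝ))⁻¹ * (((q:ℝ)+1) * ∑ j ∈ Finset.range (N - x), Cseq q j)
        = ((q:ℝ)+1) * ∑ x ∈ Finset.Icc 1 N, ((x:ℝ))⁻¹ * ∑ j ∈ Finset.range (N - x), Cseq q j := by
      rw [Finset.mul_sum]
      apply Finset.sum_congr rfl
      intros
      ring
    rw [e1, e3, ← e2]
    push_cast
    ring

lemma L2 : ∀ (q N : ℕ), 1 ≤ N →
    (N : ℝ) * Cseq (q+1) N = (Nat.factorial (q+1) : ℝ) * Eseq q N := by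
  intro q
  induction q with
  | zero =>
    intro N hN
    rw [Cseq_one, if_pos hN, mul_inv_cancel₀ (by positivity : ((N:ℝ)) ≠ 0)]
    simp [Eseq, Nat.factorial]
  | succ q ih =>
    intro N hN
    rw [L1 (q+1) N]
    have e0 : ∑ M ∈ Finset.range N, Cseq (q+1) M = ∑ M ∈ Finset.Ico 1 N, Cseq (q+1) M := by
      rw [Finset.range_eq_Ico, Finset.sum_eq_sum_Ico_succ_bot hN, Cseq_succ_zero, zero_add]
    have e1 : ∑ M ∈ Finset.Ico 1 N, Cseq (q+1) M
        = (Nat.factorial (q+1) : ℝ) * Eseq (q+1) N := by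
      rw [Eseq, Finset.mul_sum]
      apply Finset.sum_congr rfl
      intro M hM
      rw [Finset.mem_Ico] at hM
      have hM0 : ((M:ℝ)) ≠ 0 := by have : 0 < M := hM.1; positivity
      have h := ih M hM.1
      have hrw : Cseq (q+1) M = ((M:ℝ))⁻¹ * ((M:ℝ) * Cseq (q+1) M) := by
        rw [← mul_assoc, inv_mul_cancel₀ hM0, one_mul]
      rw [hrw, h]
      ring
    rw [e0, e1, ← mul_assoc]
    congr 1
    rw [Nat.factorial_succ (q+1)]
    push_cast
    ring

lemma Cseq_def0 (N : ℕ) : Cseq 0 N = if N = 0 then 1 else 0 := by rw [Cseq]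
lemma Cseq_defS (q N : ℕ) : Cseq (q+1) N = ∑ n ∈ Finset.Icc 1 N, ((n : ℝ))⁻¹ * Cseq q (N - n) := by rw [Cseq]
lemma Eseq_def0 (N : ℕ) : Eseq 0 N = 1 := by rw [Eseq]
lemma Eseq_defS (k N : ℕ) : Eseq (k+1) N = ∑ m ∈ Finset.Ico 1 N, Eseq k m / (m : ℝ) := by rw [Eseq]
lemma logSeries {z : ℝ} (hz : |z| < 1) :
    HasSum (fun n : ℕ => z ^ n / (n : ℝ)) (-Real.log (1 - z)) := by
  rw [← hasSum_nat_add_iff' 1]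
  simpa using Real.hasSum_pow_div_log_of_abs_lt_one hz

lemma log_abs_summable {z : ℝ} (hz : |z| < 1) :
    Summable (fun n : ℕ => ‖z ^ n / (n : ℝ)‖) := by
  apply Summable.of_nonneg_of_le (fun n => norm_nonneg _) (fun n => ?_)
    (summable_geometric_of_lt_one (abs_nonneg z) hz)
  rw [norm_div, Real.norm_eq_abs, abs_pow]
  rcases Nat.eq_zero_or_pos n with rfl | hn
  · simp
  · apply div_le_self (pow_nonneg (abs_nonneg z) n)
    rw [Real.norm_eq_abs, abs_of_nonneg (Nat.cast_nonneg n)]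
    exact_mod_cast hn

lemma P1 : ∀ (q : ℕ) {z : ℝ}, |z| < 1 →
    Summable (fun N : ℕ => Cseq q N * z ^ N) ∧
    ∑' N : ℕ, Cseq q N * z ^ N = (-Real.log (1 - z)) ^ q := by
  intro q
  induction q with
  | zero =>
    intro z hz
    have hne : ∀ b ∉ ({0} : Finset ℕ), Cseq 0 b * z ^ b = 0 := by
      intro b hb
      simp only [Finset.mem_singleton] at hb
      rw [Cseq_def0, if_neg hb, zero_mul]
    constructor
    · exact summable_of_ne_finset_zero hne
    · rw [tsum_eq_sum hne]
      simp [Cseq_def0]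
  | succ q ih =>
    intro z hz
    have hz' : |(|z|)| < 1 := by rwa [abs_abs]
    have ihz := ih hz
    have ihz' := ih hz'
    have ha := log_abs_summable hz
    have hb : Summable (fun N : ℕ => ‖Cseq q N * z ^ N‖) := by
      apply ihz'.1.congr
      intro N
      rw [norm_mul, Real.norm_eq_abs, Real.norm_eq_abs, abs_pow,
        abs_of_nonneg (Cseq_nonneg q N)]
    have conv : ∀ N : ℕ,
        ∑ kl ∈ Finset.HasAntidiagonal.antidiagonal N, (z ^ kl.1 / (kl.1 : ℝ)) * (Cseq q kl.2 * z ^ kl.2)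
          = Cseq (q+1) N * z ^ N := by
      intro N
      rw [Finset.Nat.sum_antidiagonal_eq_sum_range_succ_mk]
      have e1 : ∀ k ∈ Finset.range (N+1),
          (z ^ k / (k : ℝ)) * (Cseq q (N - k) * z ^ (N - k))
            = (((k:ℝ))⁻¹ * Cseq q (N - k)) * z ^ N := by
        intro k hk
        rw [Finset.mem_range] at hk
        have hkN : k + (N - k) = N := by omega
        rw [div_eq_mul_inv]
        calc z ^ k * ((k:ℝ))⁻¹ * (Cseq q (N - k) * z ^ (N - k))
            = (((k:ℝ))⁻¹ * Cseq q (N - k)) * (z ^ k * z ^ (N - k)) := by ring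
          _ = (((k:ℝ))⁻¹ * Cseq q (N - k)) * z ^ N := by rw [← pow_add, hkN]
      rw [Finset.sum_congr rfl e1, ← Finset.sum_mul]
      congr 1
      rw [Cseq_defS]
      symm
      apply Finset.sum_subset
      · intro k hk
        rw [Finset.mem_Icc] at hk
        rw [Finset.mem_range]
        omega
      · intro k hk hk'
        rw [Finset.mem_range] at hk
        rw [Finset.mem_Icc] at hk'
        have : k = 0 := by omega
        subst this
        simp
    constructor
    · exact ((summable_norm_sum_mul_antidiagonal_of_summable_norm ha hb).of_norm).congr conv
    · calc ∑' N : ℕ, Cseq (q+1) N * z ^ N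
          = ∑' N : ℕ, ∑ kl ∈ Finset.HasAntidiagonal.antidiagonal N, (z ^ kl.1 / (kl.1:ℝ)) * (Cseq q kl.2 * z ^ kl.2) :=
            (tsum_congr (fun N => (conv N))).symm
        _ = (∑' n : ℕ, z ^ n / (n:ℝ)) * (∑' N : ℕ, Cseq q N * z ^ N) :=
            (tsum_mul_tsum_eq_tsum_sum_antidiagonal_of_summable_norm ha hb).symm
        _ = (-Real.log (1 - z)) ^ (q+1) := by
            rw [(logSeries hz).tsum_eq, ihz.2, ← pow_succ']
abbrev Dec (k : ℕ) := {f : Fin k → ℕ // (∀ i, 1 ≤ f i) ∧ StrictAnti f}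

abbrev Fib (k N : ℕ) := {g : Dec k // 1 ≤ N ∧ ∀ i, g.1 i < N}

instance fibFinite (k N : ℕ) : Finite (Fib k N) := by
  apply Finite.of_injective (fun g => (fun i => (⟨g.1.1 i, g.2.2 i⟩ : Fin N) : Fin k → Fin N))
  intro g h hgh
  apply Subtype.ext
  apply Subtype.ext
  funext i
  have := congrFun hgh i
  simpa using congrArg Fin.val this

/-- head-tail decomposition of strictly decreasing positive tuples -/
noncomputable def headTail (k : ℕ) : Dec (k+1) ≃ (Σ N : ℕ, Fib k N) where
  toFun f := ⟨f.1 0,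
    ⟨⟨Fin.tail f.1, fun i => f.2.1 _, fun a b hab => f.2.2 (Fin.succ_lt_succ_iff.mpr hab)⟩,
      f.2.1 0, fun i => f.2.2 (Fin.succ_pos i)⟩⟩
  invFun x := ⟨Fin.cons x.1 x.2.1.1, by
      intro i
      refine Fin.cases ?_ ?_ i
      · simpa using x.2.2.1
      · intro j; simpa using x.2.1.2.1 j, by
      intro a b hab
      refine Fin.cases ?_ ?_ b hab
      · intro h; exact absurd h (Fin.not_lt_zero a)
      · intro j hj
        refine Fin.cases ?_ ?_ a hj
        · intro _
          simpa using x.2.2.2 j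
        · intro i hij
          simp only [Fin.cons_succ]
          exact x.2.1.2.2 (Fin.succ_lt_succ_iff.mp hij)⟩
  left_inv f := Subtype.ext (Fin.cons_self_tail f.1)
  right_inv x := by
    rfl

lemma fib_tsum_eq (k N : ℕ)
    (hG : ∑' g : Dec k, (if ∀ i, g.1 i < N then (∏ i, (g.1 i : ℝ))⁻¹ else 0) = Eseq k N) :
    ∑' g : Fib k N, (∏ i, ((g.1.1 i : ℕ) : ℝ))⁻¹ = if 1 ≤ N then Eseq k N else 0 := by
  by_cases hN : 1 ≤ N
  · rw [if_pos hN, ← hG]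
    have := tsum_subtype {g : Dec k | 1 ≤ N ∧ ∀ i, g.1 i < N} (fun d => (∏ i, ((d.1 i : ℕ) : ℝ))⁻¹)
    refine Eq.trans this ?_
    apply tsum_congr
    intro g
    rw [Set.indicator_apply]
    by_cases h : ∀ i, g.1 i < N
    · rw [if_pos (by exact ⟨hN, h⟩), if_pos h]
    · rw [if_neg (by simp only [Set.mem_setOf_eq]; tauto), if_neg h]
  · have hN0 : N = 0 := by omega
    subst hN0
    haveI : IsEmpty (Fib k 0) := ⟨fun g => by have := g.2.1; omega⟩
    rw [tsum_empty, if_neg hN]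

lemma summable_ind (k N : ℕ) (F : Dec k → ℝ) (hF : ∀ g, (∃ i, N ≤ g.1 i) → F g = 0) :
    Summable F := by
  have hfin : Finite ↥{g : Dec k | ∀ i, g.1 i < N} := by
    apply Finite.of_injective
      (fun g => (fun i => (⟨g.1.1 i, g.2 i⟩ : Fin N) : Fin k → Fin N))
    intro g h hgh
    apply Subtype.ext; apply Subtype.ext
    funext i
    simpa using congrArg Fin.val (congrFun hgh i)
  haveI := hfin
  apply summable_of_finite_support
  apply Set.Finite.subset (Set.toFinite {g : Dec k | ∀ i, g.1 i < N})
  intro g hg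
  simp only [Function.mem_support] at hg
  by_contra hmem
  simp only [Set.mem_setOf_eq, not_forall, not_lt] at hmem
  exact hg (hF g hmem)

lemma sumG : ∀ k N, ∑' g : Dec k, (if ∀ i, g.1 i < N then (∏ i, (g.1 i : ℝ))⁻¹ else 0)
    = Eseq k N := by
  intro k
  induction k with
  | zero =>
    intro N
    have : Unique (Dec 0) := by
      refine ⟨⟨⟨(fun i => i.elim0), fun i => i.elim0, fun a b h => a.elim0⟩⟩, ?_⟩
      intro g
      apply Subtype.ext
      funext i
      exact i.elim0
    rw [tsum_eq_single (default : Dec 0) (fun b hb => absurd (Subsingleton.elim b default) hb)]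
    have h1 : ∀ i : Fin 0, (default : Dec 0).1 i < N := fun i => i.elim0
    rw [if_pos h1, Eseq_def0]
    simp
  | succ k ih =>
    intro N
    set T := fun g : Dec (k+1) => (if ∀ i, g.1 i < N then (∏ i, (g.1 i : ℝ))⁻¹ else 0) with hT
    have hTsummable : Summable T := by
      apply summable_ind (k+1) N
      rintro g ⟨i, hi⟩
      rw [hT]
      simp only []
      rw [if_neg (fun hc => absurd (hc i) (not_lt.mpr hi))]
    have he : ∀ x : (Σ m : ℕ, Fib k m), T ((headTail k).symm x)
        = (if 1 ≤ x.1 ∧ x.1 < N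
            then ((x.1 : ℝ))⁻¹ * (∏ i, ((x.2.1.1 i : ℕ) : ℝ))⁻¹ else 0) := by
      rintro ⟨m, g⟩
      show T ⟨(Fin.cons m g.1.1 : Fin (k+1) → ℕ), _⟩ = _
      have hprod : (∏ i : Fin (k+1), (((Fin.cons m g.1.1 : Fin (k+1) → ℕ) i : ℕ) : ℝ))
          = (m : ℝ) * ∏ i : Fin k, ((g.1.1 i : ℕ) : ℝ) := by
        have hfc : (fun i : Fin (k+1) => (((Fin.cons m g.1.1 : Fin (k+1) → ℕ) i : ℕ) : ℝ))
            = Fin.cons (m : ℝ) (fun i => ((g.1.1 i : ℕ) : ℝ)) := by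
          funext i
          induction i using Fin.cases
          · simp
          · simp
        rw [hfc, Fin.prod_cons]
      by_cases hm : m < N
      · have hcond : ∀ i : Fin (k+1), (Fin.cons m g.1.1 : Fin (k+1) → ℕ) i < N := by
          intro i
          refine Fin.cases ?_ ?_ i
          · simpa using hm
          · intro j
            simp only [Fin.cons_succ]
            exact lt_trans (g.2.2 j) hm
        rw [hT]
        simp only []
        rw [if_pos hcond, if_pos ⟨g.2.1, hm⟩, hprod, mul_inv]
      · have hcond : ¬ (∀ i : Fin (k+1), (Fin.cons m g.1.1 : Fin (k+1) → ℕ) i < N) := by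
          intro hc
          exact hm (by simpa using hc 0)
        rw [hT]
        simp only []
        rw [if_neg hcond, if_neg (by tauto)]
    have hsig : Summable (fun x : (Σ m : ℕ, Fib k m) => T ((headTail k).symm x)) :=
      (Equiv.summable_iff (headTail k).symm).mpr hTsummable
    calc ∑' g : Dec (k+1), T g
        = ∑' x : (Σ m : ℕ, Fib k m), T ((headTail k).symm x) :=
          ((headTail k).symm.tsum_eq T).symm
      _ = ∑' m : ℕ, ∑' g : Fib k m, T ((headTail k).symm ⟨m, g⟩) :=
          Summable.tsum_sigma' (fun m => Summable.of_finite) hsig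
      _ = ∑' m : ℕ, (if 1 ≤ m ∧ m < N then ((m:ℝ))⁻¹ * Eseq k m else 0) := by
          apply tsum_congr
          intro m
          rw [tsum_congr (fun g => he ⟨m, g⟩)]
          by_cases hm : 1 ≤ m ∧ m < N
          · simp only [if_pos hm]
            rw [tsum_mul_left, fib_tsum_eq k m (ih m), if_pos hm.1]
          · simp only [if_neg hm]
            exact tsum_zero
      _ = ∑ m ∈ Finset.Ico 1 N, (if 1 ≤ m ∧ m < N then ((m:ℝ))⁻¹ * Eseq k m else 0) := by
          apply tsum_eq_sum
          intro m hm
          rw [Finset.mem_Ico] at hm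
          rw [if_neg (by tauto)]
      _ = Eseq (k+1) N := by
          rw [Eseq_defS]
          apply Finset.sum_congr rfl
          intro m hm
          rw [Finset.mem_Ico] at hm
          rw [if_pos hm, div_eq_mul_inv, mul_comm]

lemma regroup (r : ℕ) (F : ℕ → ℝ) (hF0 : F 0 = 0)
    (hS : Summable (fun N : ℕ => |F N| * Eseq r N)) :
    Summable (fun f : Dec (r+1) => F (f.1 0) * (∏ i : Fin r, ((f.1 i.succ : ℕ) : ℝ))⁻¹) ∧
    ∑' f : Dec (r+1), F (f.1 0) * (∏ i : Fin r, ((f.1 i.succ : ℕ) : ℝ))⁻¹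
      = ∑' N : ℕ, F N * Eseq r N := by
  have hWe : ∀ x : (Σ m : ℕ, Fib r m),
      F (((headTail r).symm x).1 0) * (∏ i : Fin r, ((((headTail r).symm x).1 i.succ : ℕ) : ℝ))⁻¹
        = F x.1 * (∏ i : Fin r, ((x.2.1.1 i : ℕ) : ℝ))⁻¹ := by
    rintro ⟨m, g⟩
    rfl
  have hfib : ∀ m : ℕ, ∑' g : Fib r m, (∏ i : Fin r, ((g.1.1 i : ℕ) : ℝ))⁻¹
      = if 1 ≤ m then Eseq r m else 0 := fun m => fib_tsum_eq r m (sumG r m)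
  have hw_nonneg : ∀ (m : ℕ) (g : Fib r m), 0 ≤ (∏ i : Fin r, ((g.1.1 i : ℕ) : ℝ))⁻¹ := by
    intro m g
    positivity
  have habs : Summable (fun x : (Σ m : ℕ, Fib r m) => |F x.1 * (∏ i : Fin r, ((x.2.1.1 i : ℕ) : ℝ))⁻¹|) := by
    apply (summable_sigma_of_nonneg (fun x => abs_nonneg _)).2
    constructor
    · intro m
      exact Summable.of_finite
    · have h2 : ∀ m : ℕ, ∑' g : Fib r m, |F m * (∏ i : Fin r, ((g.1.1 i : ℕ) : ℝ))⁻¹|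
          = |F m| * Eseq r m := by
        intro m
        have h1 : ∀ g : Fib r m, |F m * (∏ i : Fin r, ((g.1.1 i : ℕ) : ℝ))⁻¹|
            = |F m| * (∏ i : Fin r, ((g.1.1 i : ℕ) : ℝ))⁻¹ := by
          intro g
          rw [abs_mul, abs_of_nonneg (hw_nonneg m g)]
        rw [tsum_congr h1, tsum_mul_left, hfib m]
        rcases Nat.eq_zero_or_pos m with rfl | hm
        · rw [if_neg (by omega), hF0]
          simp
        · rw [if_pos (show 1 ≤ m from hm)]
      exact hS.congr (fun m => (h2 m).symm)
  have hsig : Summable (fun x : (Σ m : ℕ, Fib r m) => F x.1 * (∏ i : Fin r, ((x.2.1.1 i : ℕ) : ℝ))⁻¹) :=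
    habs.of_abs
  have hW : Summable (fun f : Dec (r+1) => F (f.1 0) * (∏ i : Fin r, ((f.1 i.succ : ℕ) : ℝ))⁻¹) := by
    rw [← Equiv.summable_iff (headTail r).symm]
    exact hsig.congr (fun x => (hWe x).symm)
  refine ⟨hW, ?_⟩
  calc ∑' f : Dec (r+1), F (f.1 0) * (∏ i : Fin r, ((f.1 i.succ : ℕ) : ℝ))⁻¹
      = ∑' x : (Σ m : ℕ, Fib r m),
          F (((headTail r).symm x).1 0) * (∏ i : Fin r, ((((headTail r).symm x).1 i.succ : ℕ) : ℝ))⁻¹ :=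
        ((headTail r).symm.tsum_eq _).symm
    _ = ∑' x : (Σ m : ℕ, Fib r m), F x.1 * (∏ i : Fin r, ((x.2.1.1 i : ℕ) : ℝ))⁻¹ :=
        tsum_congr hWe
    _ = ∑' m : ℕ, ∑' g : Fib r m, F m * (∏ i : Fin r, ((g.1.1 i : ℕ) : ℝ))⁻¹ :=
        Summable.tsum_sigma' (fun m => Summable.of_finite) hsig
    _ = ∑' N : ℕ, F N * Eseq r N := by
        apply tsum_congr
        intro m
        rw [tsum_mul_left, hfib m]
        rcases Nat.eq_zero_or_pos m with rfl | hm
        · rw [if_neg (by omega), hF0]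
          simp
        · rw [if_pos (show 1 ≤ m from hm)]

lemma sum_inv_le_log (N : ℕ) : ∑ m ∈ Finset.Ico 1 N, ((m : ℝ))⁻¹ ≤ 1 + Real.log N := by
  rcases Nat.eq_zero_or_pos N with rfl | hN
  · simp [Real.log_zero]
  have h1 : ∑ m ∈ Finset.Ico 1 N, ((m : ℝ))⁻¹ = (harmonic (N-1) : ℝ) := by
    rw [harmonic]
    push_cast
    rw [Finset.sum_Ico_eq_sum_range]
    apply Finset.sum_congr rfl
    intro i hi
    rw [inv_eq_one_div]
    congr 1
    push_cast
    ring
  rw [h1]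
  refine le_trans (harmonic_le_one_add_log (N-1)) ?_
  rcases Nat.eq_zero_or_pos (N - 1) with h | h
  · rw [h]
    push_cast
    rw [Real.log_zero]
    have : (0:ℝ) ≤ Real.log N := Real.log_nonneg (by exact_mod_cast hN)
    linarith
  · have : ((N - 1 : ℕ) : ℝ) ≤ (N : ℝ) := by
      push_cast [Nat.cast_sub hN]
      linarith
    have hlog := Real.log_le_log (by exact_mod_cast h) this
    linarith

lemma Eseq_le_log : ∀ (k N : ℕ), 1 ≤ N → Eseq k N ≤ (1 + Real.log N) ^ k := by
  intro k
  induction k with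
  | zero => intro N hN; rw [Eseq_def0, pow_zero]
  | succ k ih =>
    intro N hN
    have hlogN : (0:ℝ) ≤ 1 + Real.log N := by
      have : (0:ℝ) ≤ Real.log N := Real.log_nonneg (by exact_mod_cast hN)
      linarith
    rw [Eseq_defS]
    have step : ∀ m ∈ Finset.Ico 1 N, Eseq k m / (m : ℝ) ≤ (1 + Real.log N)^k * ((m:ℝ))⁻¹ := by
      intro m hm
      rw [Finset.mem_Ico] at hm
      have hm1 : (1:ℝ) ≤ (m:ℝ) := by exact_mod_cast hm.1
      have hEm : Eseq k m ≤ (1 + Real.log m)^k := ih m hm.1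
      have hmono : (1 + Real.log m)^k ≤ (1 + Real.log N)^k := by
        apply pow_le_pow_left₀
        · have : (0:ℝ) ≤ Real.log m := Real.log_nonneg hm1
          linarith
        · have : Real.log (m:ℝ) ≤ Real.log N := by
            apply Real.log_le_log (by linarith)
            exact_mod_cast le_of_lt hm.2
          linarith
      rw [div_eq_mul_inv]
      apply mul_le_mul_of_nonneg_right (le_trans hEm hmono)
      positivity
    refine le_trans (Finset.sum_le_sum step) ?_
    rw [← Finset.mul_sum, pow_succ]
    apply mul_le_mul_of_nonneg_left (sum_inv_le_log N)
    positivity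

lemma summable_E_div (k p : ℕ) : Summable (fun N : ℕ => Eseq k N / ((N:ℝ)) ^ (p+2)) := by
  set c : ℝ := 2 * ((k:ℝ) + 1) with hc
  have hc2 : (2:ℝ) ≤ c := by rw [hc]; nlinarith [Nat.cast_nonneg (α := ℝ) k]
  have hc0 : (0:ℝ) < c := by linarith
  have key : ∀ N : ℕ, 1 ≤ N → Eseq k N / ((N:ℝ)) ^ (p+2) ≤ (2*c)^k * ((N:ℝ)) ^ (-(3/2) : ℝ) := by
    intro N hN
    have hN1 : (1:ℝ) ≤ (N:ℝ) := by exact_mod_cast hN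
    have hN0 : (0:ℝ) < (N:ℝ) := by linarith
    have hrp : (1:ℝ) ≤ ((N:ℝ)) ^ (c⁻¹ : ℝ) := Real.one_le_rpow hN1 (by positivity)
    have hlog : Real.log N ≤ c * ((N:ℝ)) ^ (c⁻¹ : ℝ) := by
      have h1 : Real.log (((N:ℝ)) ^ (c⁻¹ : ℝ)) = c⁻¹ * Real.log N := Real.log_rpow hN0 _
      have h2 : Real.log (((N:ℝ)) ^ (c⁻¹ : ℝ)) ≤ ((N:ℝ)) ^ (c⁻¹ : ℝ) := by
        have := Real.log_le_sub_one_of_pos (show (0:ℝ) < ((N:ℝ)) ^ (c⁻¹:ℝ) by positivity)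
        linarith
      calc Real.log N = c * (c⁻¹ * Real.log N) := by field_simp
        _ = c * Real.log (((N:ℝ)) ^ (c⁻¹ : ℝ)) := by rw [h1]
        _ ≤ c * ((N:ℝ)) ^ (c⁻¹ : ℝ) := by
            apply mul_le_mul_of_nonneg_left h2 (le_of_lt hc0)
    have hb : 1 + Real.log N ≤ 2*c * ((N:ℝ)) ^ (c⁻¹ : ℝ) := by
      have h1 : (1:ℝ) ≤ c * ((N:ℝ)) ^ (c⁻¹ : ℝ) := by nlinarith
      nlinarith
    have hpow : (1 + Real.log N)^k ≤ (2*c)^k * ((N:ℝ)) ^ ((k:ℝ)/c) := by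
      have h0 : (0:ℝ) ≤ 1 + Real.log N := by
        have := Real.log_nonneg hN1; linarith
      calc (1 + Real.log N)^k ≤ (2*c * ((N:ℝ)) ^ (c⁻¹ : ℝ))^k := pow_le_pow_left₀ h0 hb k
        _ = (2*c)^k * (((N:ℝ)) ^ (c⁻¹ : ℝ))^k := mul_pow _ _ k
        _ = (2*c)^k * ((N:ℝ)) ^ ((k:ℝ)/c) := by
            rw [← Real.rpow_natCast (((N:ℝ)) ^ (c⁻¹ : ℝ)) k, ← Real.rpow_mul (le_of_lt hN0)]
            congr 2
            field_simp
    have hexp : ((N:ℝ)) ^ ((k:ℝ)/c) ≤ ((N:ℝ)) ^ ((1:ℝ)/2) := by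
      apply Real.rpow_le_rpow_of_exponent_le hN1
      rw [hc, div_le_div_iff₀ (by positivity) (by norm_num)]
      nlinarith [Nat.cast_nonneg (α := ℝ) k]
    have hE : Eseq k N ≤ (2*c)^k * ((N:ℝ)) ^ ((1:ℝ)/2) := by
      refine le_trans (Eseq_le_log k N hN) (le_trans hpow ?_)
      apply mul_le_mul_of_nonneg_left hexp
      positivity
    have hNpow : ((N:ℝ))^2 ≤ ((N:ℝ))^(p+2) := pow_le_pow_right₀ hN1 (by omega)
    calc Eseq k N / ((N:ℝ)) ^ (p+2)
        ≤ ((2*c)^k * ((N:ℝ)) ^ ((1:ℝ)/2)) / ((N:ℝ))^2 :=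
          div_le_div₀ (by positivity) hE (pow_pos hN0 2) hNpow
      _ = (2*c)^k * ((N:ℝ)) ^ (-(3/2) : ℝ) := by
          rw [mul_div_assoc]
          congr 1
          rw [show ((N:ℝ))^2 = ((N:ℝ)) ^ (2:ℝ) by rw [Real.rpow_two], ← Real.rpow_sub hN0]
          norm_num
  apply Summable.of_nonneg_of_le
    (fun N => div_nonneg (Eseq_nonneg k N) (by positivity))
    (fun N => ?_)
    (((Real.summable_nat_rpow (p := -(3/2))).2 (by norm_num)).mul_left ((2*c)^k))
  rcases Nat.eq_zero_or_pos N with rfl | hN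
  · simp only [Nat.cast_zero]
    rw [Real.zero_rpow (by norm_num), zero_pow (by omega), div_zero, mul_zero]
  · exact key N hN

lemma E_eq_C (r N : ℕ) (hN : 1 ≤ N) :
    Eseq r N = (N:ℝ) * Cseq (r+1) N / ((Nat.factorial (r+1) : ℝ)) := by
  have h := L2 r N hN
  have hf : ((Nat.factorial (r+1) : ℕ) : ℝ) ≠ 0 :=
    Nat.cast_ne_zero.mpr (Nat.factorial_ne_zero _)
  rw [eq_div_iff hf]
  linarith [h]

lemma P2 (r : ℕ) {z : ℝ} (hz : |z| < 1) :
    ∑' f : Dec (r+1), (z ^ (f.1 0) / ((f.1 0 : ℕ) : ℝ)) * (∏ i : Fin r, ((f.1 i.succ : ℕ) : ℝ))⁻¹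
      = (-Real.log (1 - z)) ^ (r+1) / (Nat.factorial (r+1) : ℝ) := by
  have hz' : |(|z|)| < 1 := by rwa [abs_abs]
  have hfac : ((Nat.factorial (r+1) : ℕ) : ℝ) ≠ 0 :=
    Nat.cast_ne_zero.mpr (Nat.factorial_ne_zero _)
  have hF0 : (fun N : ℕ => z ^ N / ((N:ℕ) : ℝ)) 0 = 0 := by simp
  have hkey : ∀ N : ℕ, |z ^ N / ((N:ℕ):ℝ)| * Eseq r N
      = Cseq (r+1) N * |z| ^ N / (Nat.factorial (r+1) : ℝ) := by
    intro N
    rcases Nat.eq_zero_or_pos N with rfl | hN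
    · simp [Cseq_succ_zero]
    · have hN0 : ((N:ℕ):ℝ) ≠ 0 := by
        have : (0:ℝ) < ((N:ℕ):ℝ) := by exact_mod_cast hN
        linarith
    
      rw [E_eq_C r N hN, abs_div, abs_pow, Nat.abs_cast]
      field_simp
  have hS : Summable (fun N : ℕ => |z ^ N / ((N:ℕ):ℝ)| * Eseq r N) := by
    apply Summable.congr ((P1 (r+1) hz').1.div_const (Nat.factorial (r+1) : ℝ))
    intro N
    rw [hkey N]
  obtain ⟨-, htsum⟩ := regroup r (fun N : ℕ => z ^ N / ((N:ℕ):ℝ)) hF0 hS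
  rw [htsum]
  have hkey2 : ∀ N : ℕ, z ^ N / ((N:ℕ):ℝ) * Eseq r N
      = (Cseq (r+1) N * z ^ N) / (Nat.factorial (r+1) : ℝ) := by
    intro N
    rcases Nat.eq_zero_or_pos N with rfl | hN
    · simp [Cseq_succ_zero]
    · have hN0 : ((N:ℕ):ℝ) ≠ 0 := by
        have : (0:ℝ) < ((N:ℕ):ℝ) := by exact_mod_cast hN
        linarith
      rw [E_eq_C r N hN]
      field_simp
  rw [tsum_congr hkey2, tsum_div_const, (P1 (r+1) hz).2]

noncomputable def Gterm (r p : ℕ) (f : Dec (r+1)) (u : ℝ) : ℝ :=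
  ((-1:ℝ)^(r+1) * ((Nat.factorial (r+1) : ℝ)) * (-1:ℝ)^(f.1 0) * ((f.1 0 : ℕ) : ℝ)⁻¹
      * (∏ i : Fin r, ((f.1 i.succ : ℕ) : ℝ))⁻¹)
    * (u ^ p * Real.exp (-(((f.1 0 : ℕ) : ℝ) * u)))

lemma pointwise_id (r p : ℕ) {u : ℝ} (hu : 0 < u) :
    u ^ p * Real.log (1 + Real.exp (-u)) ^ (r+1) = ∑' f : Dec (r+1), Gterm r p f u := by
  set z : ℝ := -Real.exp (-u) with hzdef
  have hz : |z| < 1 := by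
    rw [hzdef, abs_neg, abs_of_pos (Real.exp_pos _)]
    exact Real.exp_lt_one_iff.mpr (by linarith)
  have h1z : 1 - z = 1 + Real.exp (-u) := by rw [hzdef]; ring
  have hzpow : ∀ N : ℕ, z ^ N = (-1:ℝ)^N * Real.exp (-((N:ℝ) * u)) := by
    intro N
    rw [hzdef, neg_pow, ← Real.exp_nat_mul]
    congr 2
    ring
  have hterm : ∀ f : Dec (r+1), Gterm r p f u
      = ((-1:ℝ)^(r+1) * ((Nat.factorial (r+1) : ℝ)) * u ^ p)
        * ((z ^ (f.1 0) / ((f.1 0 : ℕ) : ℝ)) * (∏ i : Fin r, ((f.1 i.succ : ℕ) : ℝ))⁻¹) := by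
    intro f
    rw [Gterm, hzpow (f.1 0)]
    ring
  rw [tsum_congr hterm, tsum_mul_left, P2 r hz, h1z]
  have hpow : (-Real.log (1 + Real.exp (-u))) ^ (r+1)
      = (-1:ℝ)^(r+1) * Real.log (1 + Real.exp (-u)) ^ (r+1) := by
    rw [neg_pow]
  rw [hpow]
  have hsq : (-1:ℝ)^(r+1) * (-1:ℝ)^(r+1) = 1 := by
    rw [← pow_add]
    exact Even.neg_one_pow ⟨r+1, by ring⟩
  have hfac : ((Nat.factorial (r+1) : ℕ) : ℝ) ≠ 0 :=
    Nat.cast_ne_zero.mpr (Nat.factorial_ne_zero _)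
  symm
  calc (-1:ℝ)^(r+1) * ((Nat.factorial (r+1) : ℕ) : ℝ) * u ^ p
        * ((-1:ℝ)^(r+1) * Real.log (1 + Real.exp (-u)) ^ (r+1) / ((Nat.factorial (r+1) : ℕ) : ℝ))
      = ((-1:ℝ)^(r+1) * (-1:ℝ)^(r+1))
          * (((Nat.factorial (r+1) : ℕ) : ℝ) / ((Nat.factorial (r+1) : ℕ) : ℝ))
          * (u ^ p * Real.log (1 + Real.exp (-u)) ^ (r+1)) := by ring
    _ = u ^ p * Real.log (1 + Real.exp (-u)) ^ (r+1) := by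
        rw [hsq, div_self hfac, one_mul, one_mul]

lemma intexp (p : ℕ) {b : ℝ} (hb : 0 < b) :
    MeasureTheory.IntegrableOn (fun u : ℝ => u ^ p * Real.exp (-(b * u))) (Set.Ioi 0) ∧
    ∫ u in Set.Ioi (0:ℝ), u ^ p * Real.exp (-(b * u)) = (Nat.factorial p : ℝ) / b ^ (p+1) := by
  constructor
  · have h0 : MeasureTheory.IntegrableOn (fun x : ℝ => Real.exp (-x) * x ^ p) (Set.Ioi 0) := by
      apply MeasureTheory.IntegrableOn.congr_fun (Real.GammaIntegral_convergent
        (show (0:ℝ) < (p:ℝ) + 1 by positivity)) ?_ measurableSet_Ioi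
      intro x hx
      rw [Set.mem_Ioi] at hx
      norm_num [Real.rpow_natCast]
    have h1 : MeasureTheory.IntegrableOn
        (fun x : ℝ => Real.exp (-(b * x)) * (b * x) ^ p) (Set.Ioi 0) := by
      have := (MeasureTheory.integrableOn_Ioi_comp_mul_left_iff
        (fun x : ℝ => Real.exp (-x) * x ^ p) 0 hb).mpr (by rwa [mul_zero])
      exact this
    have h2 := h1.const_mul ((b ^ p)⁻¹)
    apply MeasureTheory.IntegrableOn.congr_fun h2 ?_ measurableSet_Ioi
    intro x hx
    have hbp : (b ^ p : ℝ) ≠ 0 := pow_ne_zero p hb.ne'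
    show (b ^ p)⁻¹ * (Real.exp (-(b * x)) * (b * x) ^ p) = x ^ p * Real.exp (-(b * x))
    rw [mul_pow]
    field_simp
  · have hval := Real.integral_rpow_mul_exp_neg_mul_Ioi
      (show (0:ℝ) < (p:ℝ) + 1 by positivity) hb
    have hcongr : ∫ t in Set.Ioi (0:ℝ), t ^ (((p:ℝ) + 1) - 1) * Real.exp (-(b * t))
        = ∫ u in Set.Ioi (0:ℝ), u ^ p * Real.exp (-(b * u)) := by
      apply MeasureTheory.setIntegral_congr_fun measurableSet_Ioi
      intro x hx
      rw [Set.mem_Ioi] at hx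
      norm_num [Real.rpow_natCast]
    rw [← hcongr, hval]
    rw [show ((p:ℝ) + 1) = ((p+1 : ℕ) : ℝ) by push_cast; ring, Real.rpow_natCast]
    rw [div_pow, one_pow]
    have hg : Real.Gamma (((p+1:ℕ) : ℕ) : ℝ) = (Nat.factorial p : ℝ) := by
      rw [show (((p+1:ℕ) : ℕ) : ℝ) = (p:ℝ) + 1 by push_cast; ring, Real.Gamma_nat_eq_factorial]
    rw [hg, one_div, inv_mul_eq_div]

open MeasureTheory Real Set Filter

theorem louchard_lemma1_part1 (p q : ℕ) (hq : 1 ≤ q) :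
    IntegrableOn (fun u : ℝ => u ^ p * Real.log (1 + Real.exp (-u)) ^ q) (Set.Ioi 0) ∧
    ∫ u in Set.Ioi (0:ℝ), u ^ p * Real.log (1 + Real.exp (-u)) ^ q
      = (Nat.factorial p : ℝ) * (Nat.factorial q) * (-1) ^ q * altMZV (p + 2) (q - 1) := by
  obtain ⟨r, rfl⟩ : ∃ r, q = r + 1 := ⟨q - 1, by omega⟩
  constructor
  · -- integrability
    have hlogc : Continuous (fun u : ℝ => Real.log (1 + Real.exp (-u))) := by
      apply Continuous.log
      · continuity
      · intro x
        positivity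
    have hcont : Continuous (fun u : ℝ => u ^ p * Real.log (1 + Real.exp (-u)) ^ (r+1)) :=
      (continuous_pow p).mul (hlogc.pow (r+1))
    have hdom := (intexp p (b := 1) one_pos).1
    apply MeasureTheory.Integrable.mono' hdom hcont.aestronglyMeasurable.restrict
    rw [MeasureTheory.ae_restrict_iff' measurableSet_Ioi]
    filter_upwards with u
    intro hu
    rw [Set.mem_Ioi] at hu
    have hexp : 0 < Real.exp (-u) := Real.exp_pos _
    have hlogpos : 0 < Real.log (1 + Real.exp (-u)) := Real.log_pos (by linarith)
    have hlogle : Real.log (1 + Real.exp (-u)) ≤ Real.exp (-u) := by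
      have := Real.log_le_sub_one_of_pos (show (0:ℝ) < 1 + Real.exp (-u) by linarith)
      linarith
    have hexple : Real.exp (-u) ≤ 1 := le_of_lt (Real.exp_lt_one_iff.mpr (by linarith))
    rw [Real.norm_eq_abs, abs_of_nonneg (by positivity)]
    have h1 : Real.log (1 + Real.exp (-u)) ^ (r+1) ≤ Real.exp (-u) ^ (r+1) :=
      pow_le_pow_left₀ hlogpos.le hlogle _
    have h2 : Real.exp (-u) ^ (r+1) ≤ Real.exp (-u) := by
      calc Real.exp (-u) ^ (r+1) ≤ Real.exp (-u) ^ 1 :=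
            pow_le_pow_of_le_one hexp.le hexple (by omega)
        _ = Real.exp (-u) := pow_one _
    calc u ^ p * Real.log (1 + Real.exp (-u)) ^ (r+1) ≤ u ^ p * Real.exp (-u) :=
          mul_le_mul_of_nonneg_left (h1.trans h2) (by positivity)
      _ = u ^ p * Real.exp (-(1 * u)) := by rw [one_mul]
  · -- the value of the integral
    simp only [Nat.add_sub_cancel]
    have hNf : ∀ f : Dec (r+1), (0:ℝ) < ((f.1 0 : ℕ) : ℝ) := fun f => by
      have := f.2.1 0
      exact_mod_cast this
    have hProdf : ∀ f : Dec (r+1), (0:ℝ) < ∏ i : Fin r, ((f.1 i.succ : ℕ) : ℝ) := fun f =>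
      Finset.prod_pos (fun i _ => by have := f.2.1 i.succ; exact_mod_cast this)
    set F : ℕ → ℝ := fun N => ((Nat.factorial (r+1) : ℝ)) * (Nat.factorial p : ℝ) / ((N:ℝ)) ^ (p+2)
      with hFdef
    have hF0 : F 0 = 0 := by
      rw [hFdef]
      norm_num
    have hFS : Summable (fun N : ℕ => |F N| * Eseq r N) := by
      apply Summable.congr ((summable_E_div r p).mul_left
        (((Nat.factorial (r+1) : ℝ)) * (Nat.factorial p : ℝ)))
      intro N
      rw [hFdef]
      rw [abs_of_nonneg (by positivity)]
      ring
    have hreg := regroup r F hF0 hFS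
    have hint : ∀ f : Dec (r+1),
        MeasureTheory.IntegrableOn
          (fun u : ℝ => u ^ p * Real.exp (-(((f.1 0 : ℕ) : ℝ) * u))) (Set.Ioi 0) ∧
        ∫ u in Set.Ioi (0:ℝ), u ^ p * Real.exp (-(((f.1 0 : ℕ) : ℝ) * u))
          = (Nat.factorial p : ℝ) / ((f.1 0 : ℕ) : ℝ) ^ (p+1) := fun f => intexp p (hNf f)
    have hmeas : ∀ f : Dec (r+1),
        AEStronglyMeasurable (Gterm r p f) (volume.restrict (Set.Ioi 0)) := by
      intro f
      apply Continuous.aestronglyMeasurable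
      apply continuous_const.mul
      apply (continuous_pow p).mul
      apply Real.continuous_exp.comp
      continuity
    have hGint : ∀ f : Dec (r+1), MeasureTheory.Integrable (Gterm r p f)
        (volume.restrict (Set.Ioi 0)) := by
      intro f
      exact (hint f).1.const_mul _
    have habsc : ∀ f : Dec (r+1),
        |(-1:ℝ)^(r+1) * ((Nat.factorial (r+1) : ℝ)) * (-1:ℝ)^(f.1 0) * ((f.1 0 : ℕ) : ℝ)⁻¹
          * (∏ i : Fin r, ((f.1 i.succ : ℕ) : ℝ))⁻¹|
        = ((Nat.factorial (r+1) : ℝ)) * ((f.1 0 : ℕ) : ℝ)⁻¹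
          * (∏ i : Fin r, ((f.1 i.succ : ℕ) : ℝ))⁻¹ := by
      intro f
      rw [abs_mul, abs_mul, abs_mul, abs_mul, abs_pow, abs_pow, abs_neg, abs_one, one_pow,
        one_pow, one_mul, mul_one, abs_of_nonneg (Nat.cast_nonneg _),
        abs_of_pos (inv_pos.mpr (hNf f)), abs_of_pos (inv_pos.mpr (hProdf f))]
    have hlint : ∀ f : Dec (r+1),
        ∫⁻ u in Set.Ioi (0:ℝ), ‖Gterm r p f u‖₊
          = ENNReal.ofReal (F (f.1 0) * (∏ i : Fin r, ((f.1 i.succ : ℕ) : ℝ))⁻¹) := by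
      intro f
      calc ∫⁻ u in Set.Ioi (0:ℝ), ‖Gterm r p f u‖₊
          = ∫⁻ u in Set.Ioi (0:ℝ), ENNReal.ofReal |Gterm r p f u| :=
            MeasureTheory.lintegral_congr (fun u => Real.enorm_eq_ofReal_abs _)
        _ = ENNReal.ofReal (∫ u in Set.Ioi (0:ℝ), |Gterm r p f u|) :=
            (MeasureTheory.ofReal_integral_eq_lintegral_ofReal (hGint f).abs
              (Filter.Eventually.of_forall (fun x => abs_nonneg _))).symm
        _ = ENNReal.ofReal (F (f.1 0) * (∏ i : Fin r, ((f.1 i.succ : ℕ) : ℝ))⁻¹) := by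
            congr 1
            have heq : ∀ u ∈ Set.Ioi (0:ℝ), |Gterm r p f u|
                = (((Nat.factorial (r+1) : ℝ)) * ((f.1 0 : ℕ) : ℝ)⁻¹
                    * (∏ i : Fin r, ((f.1 i.succ : ℕ) : ℝ))⁻¹)
                  * (u ^ p * Real.exp (-(((f.1 0 : ℕ) : ℝ) * u))) := by
              intro u hu
              rw [Set.mem_Ioi] at hu
              rw [Gterm, abs_mul, habsc f, abs_of_nonneg (by positivity)]
            rw [MeasureTheory.setIntegral_congr_fun measurableSet_Ioi heq,
              MeasureTheory.integral_const_mul, (hint f).2, hFdef]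
            have hN0 : ((f.1 0 : ℕ) : ℝ) ≠ 0 := (hNf f).ne'
            field_simp
            ring
    have hnetop : (∑' f : Dec (r+1), ∫⁻ u in Set.Ioi (0:ℝ), ‖Gterm r p f u‖₊) ≠ ⊤ := by
      rw [tsum_congr hlint,
        ← ENNReal.ofReal_tsum_of_nonneg (fun f => by positivity) hreg.1]
      exact ENNReal.ofReal_ne_top
    have hptw : ∫ u in Set.Ioi (0:ℝ), u ^ p * Real.log (1 + Real.exp (-u)) ^ (r+1)
        = ∫ u in Set.Ioi (0:ℝ), ∑' f : Dec (r+1), Gterm r p f u :=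
      MeasureTheory.setIntegral_congr_fun measurableSet_Ioi
        (fun u hu => pointwise_id r p (Set.mem_Ioi.mp hu))
    rw [hptw, MeasureTheory.integral_tsum hmeas hnetop]
    have hIf : ∀ f : Dec (r+1), ∫ u in Set.Ioi (0:ℝ), Gterm r p f u
        = ((Nat.factorial p : ℝ) * (Nat.factorial (r+1) : ℝ) * (-1:ℝ)^(r+1))
          * ((-1 : ℝ) ^ (f.1 0) / ((f.1 0 : ℝ) ^ (p+2) * ∏ i : Fin r, (f.1 i.succ : ℝ))) := by
      intro f
      simp only [Gterm]
      rw [MeasureTheory.integral_const_mul, (hint f).2]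
      have hN0 : ((f.1 0 : ℕ) : ℝ) ≠ 0 := (hNf f).ne'
      have hP0 : (∏ i : Fin r, ((f.1 i.succ : ℕ) : ℝ)) ≠ 0 := (hProdf f).ne'
      field_simp
      ring
    rw [tsum_congr hIf, tsum_mul_left]
    rfl
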